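/- Let u(x) := Σ_{j=1}^{∞} i_j(x)·4^{−j} on [0,1)², and let γ : [0,1) → [0,1]² be the Lebesgue curve γ(t) := ( Σ_{j=1}^{∞} (t_j mod 2)·2^{−j} , Σ_{j=1}^{∞} ⌊t_j/2⌋·2^{−j} ) with t_j := ⌊4^j t⌋ − 4⌊4^{j−1} t⌋. Then for every t ∈ [0,1), the normalized restrictions h^{−1}·1_{{x ∈ [0,1)² : t ≤ u(x) ≤ t+h}}·L² converge weakly to the Dirac mass δ_{γ(t)} as h → 0⁺; that is, for every bounded continuous f : ℝ² → ℝ, lim_{h→0⁺} (1/h) ∫_{{x ∈ [0,1)² : t ≤ u(x) ≤ t+h}} f(x) dL²(x) = f(γ(t)). -/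

import Mathlib

open MeasureTheory Set Filter
open scoped ENNReal NNReal

noncomputable section

/-- The half-open unit square `[0,1)²` in `ℝ²`. -/
def unitSq : Set (ℝ × ℝ) := Set.Ico (0:ℝ) 1 ×ˢ Set.Ico (0:ℝ) 1

/-- The four contractions `B₀, B₁, B₂, B₃` mapping `[0,1)²` onto its four half-open
dyadic subsquares (lower-left, lower-right, upper-left, upper-right). -/
def Bmap (i : Fin 4) (x : ℝ × ℝ) : ℝ × ℝ :=
  (x.1 / 2 + (if i.val % 2 = 1 then (1:ℝ)/2 else 0),
   x.2 / 2 + (if 2 ≤ i.val then (1:ℝ)/2 else 0))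

/-- The inverse maps `A₀, A₁, A₂, A₃` of `B₀, …, B₃`. -/
def Amap (i : Fin 4) (x : ℝ × ℝ) : ℝ × ℝ :=
  (2 * x.1 - (if i.val % 2 = 1 then (1:ℝ) else 0),
   2 * x.2 - (if 2 ≤ i.val then (1:ℝ) else 0))

/-- The four half-open dyadic subsquares `Q₀, Q₁, Q₂, Q₃` of `[0,1)²`. -/
def Qsub (i : Fin 4) : Set (ℝ × ℝ) := Bmap i '' unitSq

/-- The step function `ū = Σ_{i=0}^{3} (i/4)·1_{Q_i}`. -/
def ubar (x : ℝ × ℝ) : ℝ :=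
  ∑ i : Fin 4, ((i.val : ℝ) / 4) * (Qsub i).indicator (fun _ => (1:ℝ)) x

/-- The operator `L`: `(Lv)(x) = ū(x) + (1/4) Σ_i v(A_i x)·1_{Q_i}(x)` on `[0,1)²`,
extended by `0` outside. -/
def Lop (v : ℝ × ℝ → ℝ) : ℝ × ℝ → ℝ :=
  unitSq.indicator fun x =>
    ubar x + (1/4) * ∑ i : Fin 4, (Qsub i).indicator (fun y => v (Amap i y)) x

/-- The `j`-th binary digit `a_j(s) = ⌊2^j s⌋ − 2⌊2^{j−1} s⌋` of `s ∈ [0,1)` (`j ≥ 1`). -/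
def bdigit (j : ℕ) (s : ℝ) : ℤ := ⌊(2:ℝ)^j * s⌋ - 2 * ⌊(2:ℝ)^(j-1) * s⌋

/-- The `j`-th quadrant digit `i_j(x) = a_j(x₁) + 2 a_j(x₂) ∈ {0,1,2,3}` of `x ∈ [0,1)²`. -/
def qdigit (j : ℕ) (x : ℝ × ℝ) : ℤ := bdigit j x.1 + 2 * bdigit j x.2

/-- The Flat Mountain function `u(x) = Σ_{j≥1} i_j(x)·4^{−j}` on `[0,1)²`, `0` outside. -/
def uFM : ℝ × ℝ → ℝ :=
  unitSq.indicator fun x => ∑' j : ℕ, (qdigit (j+1) x : ℝ) / 4^(j+1)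

/-- The iterates `u₀ = 0`, `u_{n+1} = L u_n`. -/
def uIter : ℕ → ℝ × ℝ → ℝ
  | 0 => fun _ => 0
  | (n+1) => Lop (uIter n)

/-- The dyadic square `Q_{i₁,…,i_n} = B_{i₁} ∘ ⋯ ∘ B_{i_n} ([0,1)²)` indexed by a finite
sequence of quadrant digits. -/
def Qseq : List (Fin 4) → Set (ℝ × ℝ)
  | [] => unitSq
  | (i :: l) => Bmap i '' Qseq l

/-- The `j`-th base-4 digit `t_j = ⌊4^j t⌋ − 4⌊4^{j−1} t⌋` of `t ∈ [0,1)` (`j ≥ 1`). -/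
def tdigit (j : ℕ) (t : ℝ) : ℤ := ⌊(4:ℝ)^j * t⌋ - 4 * ⌊(4:ℝ)^(j-1) * t⌋

/-- The Lebesgue (Z-order) space-filling curve `γ`. -/
def lcurve (t : ℝ) : ℝ × ℝ :=
  (∑' j : ℕ, ((tdigit (j+1) t % 2 : ℤ) : ℝ) / 2^(j+1),
   ∑' j : ℕ, ((tdigit (j+1) t / 2 : ℤ) : ℝ) / 2^(j+1))

end


namespace FM18


lemma digit_bound {b : ℤ} (hb : 0 < b) (y : ℝ) :
    0 ≤ ⌊(b:ℝ)*y⌋ - b*⌊y⌋ ∧ ⌊(b:ℝ)*y⌋ - b*⌊y⌋ < b := by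
  have hbR : (0:ℝ) < (b:ℝ) := by exact_mod_cast hb
  constructor
  · have : (b*⌊y⌋ : ℤ) ≤ ⌊(b:ℝ)*y⌋ := by
      apply Int.le_floor.2
      push_cast
      exact mul_le_mul_of_nonneg_left (Int.floor_le y) hbR.le
    omega
  · have : ⌊(b:ℝ)*y⌋ < b*⌊y⌋ + b := by
      apply Int.floor_lt.2
      push_cast
      have := Int.lt_floor_add_one y
      nlinarith
    omega

lemma bdigit_succ_eq (j : ℕ) (s : ℝ) :
    bdigit (j+1) s = ⌊(2:ℝ)*((2:ℝ)^j*s)⌋ - 2*⌊(2:ℝ)^j*s⌋ := by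
  unfold bdigit
  simp only [Nat.add_sub_cancel]
  ring_nf

lemma bdigit_mem (j : ℕ) (s : ℝ) : bdigit (j+1) s = 0 ∨ bdigit (j+1) s = 1 := by
  have h := digit_bound (b := 2) (by norm_num) ((2:ℝ)^j*s)
  rw [bdigit_succ_eq]
  push_cast at h
  omega

lemma tdigit_succ_eq (j : ℕ) (t : ℝ) :
    tdigit (j+1) t = ⌊(4:ℝ)*((4:ℝ)^j*t)⌋ - 4*⌊(4:ℝ)^j*t⌋ := by
  unfold tdigit
  simp only [Nat.add_sub_cancel]
  ring_nf

lemma tdigit_bounds (j : ℕ) (t : ℝ) : 0 ≤ tdigit (j+1) t ∧ tdigit (j+1) t < 4 := by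
  have h := digit_bound (b := 4) (by norm_num) ((4:ℝ)^j*t)
  rw [tdigit_succ_eq]
  push_cast at h
  omega

lemma qdigit_bounds (j : ℕ) (x : ℝ × ℝ) : 0 ≤ qdigit (j+1) x ∧ qdigit (j+1) x ≤ 3 := by
  have h1 := bdigit_mem j x.1
  have h2 := bdigit_mem j x.2
  unfold qdigit
  omega

lemma digit_sum_eq {b : ℤ} (hb : 0 < b) (s : ℝ) (n : ℕ) :
    ∑ j ∈ Finset.range n, ((⌊(b:ℝ)^(j+1)*s⌋ - b*⌊(b:ℝ)^j*s⌋ : ℤ):ℝ)/(b:ℝ)^(j+1)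
      = (⌊(b:ℝ)^n*s⌋:ℝ)/(b:ℝ)^n - (⌊s⌋:ℝ) := by
  have hbR : (0:ℝ) < (b:ℝ) := by exact_mod_cast hb
  induction n with
  | zero => simp
  | succ n ih =>
      rw [Finset.sum_range_succ, ih]
      have h1 : ((b:ℝ))^(n+1) ≠ 0 := by positivity
      have h2 : ((b:ℝ))^n ≠ 0 := by positivity
      push_cast
      field_simp
      ring

lemma bdigit_sum (s : ℝ) (n : ℕ) :
    ∑ j ∈ Finset.range n, (bdigit (j+1) s : ℝ)/2^(j+1)
      = (⌊(2:ℝ)^n*s⌋:ℝ)/2^n - (⌊s⌋:ℝ) := by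
  have h := digit_sum_eq (b := 2) (by norm_num) s n
  push_cast at h
  rw [← h]
  apply Finset.sum_congr rfl
  intro j _
  rw [bdigit_succ_eq]
  push_cast
  ring_nf

lemma tdigit_sum (t : ℝ) (n : ℕ) :
    ∑ j ∈ Finset.range n, (tdigit (j+1) t : ℝ)/4^(j+1)
      = (⌊(4:ℝ)^n*t⌋:ℝ)/4^n - (⌊t⌋:ℝ) := by
  have h := digit_sum_eq (b := 4) (by norm_num) t n
  push_cast at h
  rw [← h]
  apply Finset.sum_congr rfl
  intro j _
  rw [tdigit_succ_eq]
  push_cast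
  ring_nf



variable {b : ℝ}

lemma summable_geom' (hb : 1 < b) : Summable (fun j : ℕ => (b-1)/b^(j+1)) := by
  have h0 : (0:ℝ) ≤ 1/b := by positivity
  have h1 : 1/b < 1 := by
    rw [div_lt_one (by linarith)]; linarith
  have := (summable_geometric_of_lt_one h0 h1).mul_left ((b-1)/b)
  apply this.congr
  intro j
  have hbne : b ≠ 0 := by linarith
  field_simp
  ring_nf
  have hX : b^j * b⁻¹^j = 1 := by rw [← mul_pow, mul_inv_cancel₀ hbne, one_pow]
  linear_combination (b^2 - b) * hX

lemma geom_tsum (hb : 1 < b) : ∑' j : ℕ, (b-1)/b^(j+1) = 1 := by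
  have h0 : (0:ℝ) ≤ 1/b := by positivity
  have h1 : 1/b < 1 := by rw [div_lt_one (by linarith)]; linarith
  have hbne : b ≠ 0 := by linarith
  have hg : ∑' j : ℕ, (1/b)^j = (1 - 1/b)⁻¹ := tsum_geometric_of_lt_one h0 h1
  calc ∑' j : ℕ, (b-1)/b^(j+1)
      = ∑' j : ℕ, ((b-1)/b) * (1/b)^j := by
        apply tsum_congr; intro j; field_simp; ring_nf; have hX : b^j * b⁻¹^j = 1 := (by rw [← mul_pow, mul_inv_cancel₀ hbne, one_pow]); linear_combination (b - b^2) * hX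
    _ = ((b-1)/b) * (1 - 1/b)⁻¹ := by rw [tsum_mul_left, hg]
    _ = 1 := by
        rw [inv_eq_one_div]
        have hb1 : b - 1 ≠ 0 := by linarith
        field_simp

lemma geom_fin (hb : 1 < b) (n : ℕ) : ∀ m : ℕ,
    ∑ i ∈ Finset.range m, (b-1)/b^(n+i+1) = 1/b^n - 1/b^(n+m) := by
  have hbne : b ≠ 0 := by linarith
  intro m
  induction m with
  | zero => simp
  | succ m ih =>
      rw [Finset.sum_range_succ, ih]
      have h1 : b^(n+m) ≠ 0 := by positivity
      have h2 : b^(n+m+1) = b^(n+m) * b := by ring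
      have h3 : b^n ≠ 0 := by positivity
      field_simp
      ring

/-- generic: summability of a digit series -/
lemma summable_digits (hb : 1 < b) {e : ℕ → ℝ} (h0 : ∀ j, 0 ≤ e j)
    (hD : ∀ j, e j ≤ (b-1)/b^(j+1)) : Summable e :=
  Summable.of_nonneg_of_le h0 hD (summable_geom' hb)

lemma tsum_digits_le (hb : 1 < b) {e : ℕ → ℝ} (h0 : ∀ j, 0 ≤ e j)
    (hD : ∀ j, e j ≤ (b-1)/b^(j+1)) : ∑' j, e j ≤ 1 := by
  have := Summable.tsum_le_tsum hD (summable_digits hb h0 hD) (summable_geom' hb)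
  rwa [geom_tsum hb] at this

/-- tail bound: `∑_{j≥n} e j ≤ 1/b^n`, stated via the shifted series. -/
lemma tsum_tail_le (hb : 1 < b) {e : ℕ → ℝ} (h0 : ∀ j, 0 ≤ e j)
    (hD : ∀ j, e j ≤ (b-1)/b^(j+1)) (n : ℕ) :
    ∑' j, e (j + n) ≤ 1/b^n := by
  have hbne : b ≠ 0 := by linarith
  have hsum : Summable (fun j => e (j + n)) := (summable_digits hb h0 hD).comp_injective
    (add_left_injective n)
  have hmaj : Summable (fun j : ℕ => (1/b^n) * ((b-1)/b^(j+1))) :=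
    (summable_geom' hb).mul_left _
  have : ∑' j, e (j + n) ≤ ∑' j : ℕ, (1/b^n) * ((b-1)/b^(j+1)) := by
    apply Summable.tsum_le_tsum _ hsum hmaj
    intro j
    calc e (j + n) ≤ (b-1)/b^(j+n+1) := hD _
      _ = (1/b^n) * ((b-1)/b^(j+1)) := by field_simp; ring_nf
  rwa [tsum_mul_left, geom_tsum hb, mul_one] at this

lemma tsum_tail_nonneg {e : ℕ → ℝ} (h0 : ∀ j, 0 ≤ e j) (n : ℕ) :
    0 ≤ ∑' j, e (j + n) := tsum_nonneg (fun j => h0 _)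

/-- strict tail bound when some digit beyond `n` is deficient. -/
lemma tsum_tail_lt (hb : 1 < b) {e : ℕ → ℝ} (h0 : ∀ j, 0 ≤ e j)
    (hD : ∀ j, e j ≤ (b-1)/b^(j+1)) {n k : ℕ} (hnk : n ≤ k)
    (hk : e k ≤ (b-2)/b^(k+1)) :
    ∑' j, e (j + n) < 1/b^n := by
  have hbne : b ≠ 0 := by linarith
  set m := k - n + 1 with hm
  have hsum : Summable (fun j => e (j + n)) := (summable_digits hb h0 hD).comp_injective
    (add_left_injective n)
  have hsplit := Summable.sum_add_tsum_nat_add (f := fun j => e (j + n)) m hsum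
  -- ∑_{i<m} e (i+n) + ∑' i, e (i+m+n) = ∑' j, e (j+n)
  have htail : ∑' i, e (i + m + n) ≤ 1/b^(n+m) := by
    have := tsum_tail_le hb h0 hD (n+m)
    apply le_trans _ this
    apply le_of_eq
    apply tsum_congr
    intro i
    congr 1
    omega
  have hfin : ∑ i ∈ Finset.range m, e (i + n) ≤ (1/b^n - 1/b^(n+m)) - 1/b^(k+1) := by
    have hgf := geom_fin hb n m
    have hk' : k = (m-1) + n := by omega
    have hsplit2 : ∑ i ∈ Finset.range m, e (i + n)
        = ∑ i ∈ Finset.range (m-1), e (i + n) + e ((m-1) + n) := by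
      have : m = (m-1) + 1 := by omega
      rw [this, Finset.sum_range_succ]
      congr 1 <;> omega
    rw [hsplit2]
    have h1 : ∑ i ∈ Finset.range (m-1), e (i + n) ≤ ∑ i ∈ Finset.range (m-1), (b-1)/b^(n+i+1) := by
      apply Finset.sum_le_sum
      intro i _
      have := hD (i + n)
      apply le_trans this
      apply le_of_eq
      congr 2
      omega
    have h2 : e ((m-1) + n) ≤ (b-2)/b^(k+1) := by rw [← hk']; exact hk
    have h3 : ∑ i ∈ Finset.range (m-1), (b-1)/b^(n+i+1) = 1/b^n - 1/b^(n+(m-1)) := geom_fin hb n (m-1)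
    have h4 : n + (m-1) = k := by omega
    have h5 : n + m = k + 1 := by omega
    rw [h3, h4] at h1
    rw [h5]
    have hbk : b^(k+1) ≠ 0 := by positivity
    have hbk2 : (0:ℝ) < b^(k+1) := by positivity
    have hbk3 : b^(k+1) = b^k * b := by ring
    have hbkne : b^k ≠ 0 := by positivity
    have : (b-2)/b^(k+1) = 1/b^k - 1/b^(k+1) - 1/b^(k+1) + (1/b^(k+1) - 1/b^(k+1)) := by
      field_simp
      ring
    nlinarith [h1, h2]
  have hpos : (0:ℝ) < 1/b^(k+1) := by positivity
  have h5 : n + m = k + 1 := by omega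
  have hsplit' : ∑ i ∈ Finset.range m, e (i+n) + ∑' i, e ((i+m)+n) = ∑' j, e (j+n) := hsplit
  have heq : ∑' i, e ((i+m)+n) = ∑' i, e (i+m+n) := rfl
  rw [h5] at hfin htail
  linarith [hsplit', htail, hfin]
-- end

lemma bdigit_rec (j : ℕ) (s : ℝ) :
    ⌊(2:ℝ)^(j+1)*s⌋ = 2*⌊(2:ℝ)^j*s⌋ + bdigit (j+1) s := by
  rw [bdigit_succ_eq]
  have h : (2:ℝ)^(j+1)*s = 2*((2:ℝ)^j*s) := by ring
  rw [h]; ring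

lemma exists_bdigit_zero {s : ℝ} (hs : s ∈ Set.Ico (0:ℝ) 1) (n : ℕ) :
    ∃ k, n ≤ k ∧ bdigit (k+1) s = 0 := by
  by_contra hcon
  push_neg at hcon
  have hone : ∀ k, n ≤ k → bdigit (k+1) s = 1 := fun k hk =>
    (bdigit_mem k s).resolve_left (hcon k hk)
  have hclaim : ∀ m : ℕ, ⌊(2:ℝ)^(n+m)*s⌋ = 2^m*⌊(2:ℝ)^n*s⌋ + (2^m - 1) := by
    intro m
    induction m with
    | zero => simp
    | succ m ih =>
        have h1 := bdigit_rec (n+m) s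
        rw [hone (n+m) (by omega)] at h1
        have h2 : n + (m+1) = (n+m) + 1 := by omega
        rw [h2, h1, ih]
        try ring
  have hfrac : (2:ℝ)^n*s < (⌊(2:ℝ)^n*s⌋:ℝ) + 1 := Int.lt_floor_add_one _
  set c : ℝ := (⌊(2:ℝ)^n*s⌋:ℝ) + 1 - (2:ℝ)^n*s with hc
  have hcpos : 0 < c := sub_pos.mpr hfrac
  obtain ⟨m, hm⟩ := exists_pow_lt_of_lt_one hcpos (by norm_num : (1:ℝ)/2 < 1)
  have h3 := Int.floor_le ((2:ℝ)^(n+m)*s)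
  rw [hclaim m] at h3
  push_cast at h3
  have h4 : (2:ℝ)^(n+m) = 2^n * 2^m := by rw [pow_add]
  rw [h4] at h3
  have h5 : (0:ℝ) < 2^m := by positivity
  have h6 : ((1:ℝ)/2)^m = 1/2^m := by rw [div_pow]; norm_num
  rw [h6] at hm
  rw [div_lt_iff₀ h5] at hm
  nlinarith

lemma pow_sub_mul (r : ℝ) (hr : r ≠ 0) {j n : ℕ} (h : j < n) :
    r^(n-1-j) * r^(j+1) = r^n := by
  rw [← pow_add]; congr 1; omega

lemma cast_weighted_sum (q : ℕ → ℤ) (n : ℕ) :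
    ((∑ j ∈ Finset.range n, q j * 4^(n-1-j) : ℤ) : ℝ)
      = 4^n * ∑ j ∈ Finset.range n, (q j : ℝ)/4^(j+1) := by
  rw [Finset.mul_sum]
  push_cast
  apply Finset.sum_congr rfl
  intro j hj
  have hj' : j < n := Finset.mem_range.1 hj
  have h4 : ((4:ℝ))^(j+1) ≠ 0 := by positivity
  rw [mul_comm ((4:ℝ)^n), div_mul_eq_mul_div, eq_div_iff h4, mul_assoc,
    pow_sub_mul 4 (by norm_num) hj']

lemma cast_weighted_sum2 (q : ℕ → ℤ) (n : ℕ) :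
    ((∑ j ∈ Finset.range n, q j * 2^(n-1-j) : ℤ) : ℝ)
      = 2^n * ∑ j ∈ Finset.range n, (q j : ℝ)/2^(j+1) := by
  rw [Finset.mul_sum]
  push_cast
  apply Finset.sum_congr rfl
  intro j hj
  have hj' : j < n := Finset.mem_range.1 hj
  have h4 : ((2:ℝ))^(j+1) ≠ 0 := by positivity
  rw [mul_comm ((2:ℝ)^n), div_mul_eq_mul_div, eq_div_iff h4, mul_assoc,
    pow_sub_mul 2 (by norm_num) hj']

/-- the quadrant-digit series of a point of the square -/
noncomputable def eq4 (x : ℝ × ℝ) (j : ℕ) : ℝ := (qdigit (j+1) x : ℝ)/4^(j+1)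

lemma eq4_nonneg (x : ℝ × ℝ) (j : ℕ) : 0 ≤ eq4 x j := by
  have := qdigit_bounds j x
  unfold eq4
  have h4 : (0:ℝ) < 4^(j+1) := by positivity
  apply div_nonneg _ h4.le
  exact_mod_cast this.1

lemma eq4_le (x : ℝ × ℝ) (j : ℕ) : eq4 x j ≤ ((4:ℝ)-1)/4^(j+1) := by
  have h := qdigit_bounds j x
  have h3 : ((qdigit (j+1) x : ℤ):ℝ) ≤ (4:ℝ)-1 := by
    norm_num
    exact_mod_cast h.2
  unfold eq4
  gcongr


lemma mem_unitSq {x : ℝ × ℝ} (hx : x ∈ unitSq) :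
    x.1 ∈ Set.Ico (0:ℝ) 1 ∧ x.2 ∈ Set.Ico (0:ℝ) 1 := hx

lemma uFM_eq_tsum {x : ℝ × ℝ} (hx : x ∈ unitSq) : uFM x = ∑' j, eq4 x j :=
  Set.indicator_of_mem hx _

lemma summable_eq4 (x : ℝ × ℝ) : Summable (eq4 x) :=
  summable_digits (by norm_num) (eq4_nonneg x) (eq4_le x)

/-- KEY(u): the floor of `4^n · u`. -/
lemma floor_u {x : ℝ × ℝ} (hx : x ∈ unitSq) (n : ℕ) :
    ⌊(4:ℝ)^n * uFM x⌋ = ∑ j ∈ Finset.range n, qdigit (j+1) x * 4^(n-1-j) := by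
  have hsum := summable_eq4 x
  have hsplit := Summable.sum_add_tsum_nat_add (f := eq4 x) n hsum
  set T := ∑' j, eq4 x (j + n) with hT
  have hT0 : 0 ≤ T := tsum_tail_nonneg (eq4_nonneg x) n
  have hT1 : T < 1/(4:ℝ)^n := by
    obtain ⟨k, hnk, hbk⟩ := exists_bdigit_zero (mem_unitSq hx).1 n
    apply tsum_tail_lt (by norm_num) (eq4_nonneg x) (eq4_le x) hnk
    have hq : qdigit (k+1) x = 2 * bdigit (k+1) x.2 := by unfold qdigit; omega
    have hb2 := bdigit_mem k x.2
    unfold eq4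
    have h4 : (0:ℝ) < 4^(k+1) := by positivity
    rw [div_le_div_iff₀ h4 h4]
    have : (qdigit (k+1) x : ℝ) ≤ 2 := by rw [hq]; push_cast; rcases hb2 with h|h <;> rw [h] <;> norm_num
    nlinarith
  rw [uFM_eq_tsum hx, ← hsplit]
  have hcast := cast_weighted_sum (fun j => qdigit (j+1) x) n
  have hps : ∑ j ∈ Finset.range n, eq4 x j
      = ∑ j ∈ Finset.range n, ((fun j => qdigit (j+1) x) j : ℝ)/4^(j+1) := rfl
  have h4n : (0:ℝ) < 4^n := by positivity
  rw [Int.floor_eq_iff]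
  rw [hcast, ← hps] at *
  constructor
  · nlinarith
  · have : (4:ℝ)^n * T < 1 := by
      have := mul_lt_mul_of_pos_left hT1 h4n
      rwa [mul_one_div, div_self h4n.ne'] at this
    push_cast
    nlinarith

lemma u_mem {x : ℝ × ℝ} (hx : x ∈ unitSq) : uFM x ∈ Set.Ico (0:ℝ) 1 := by
  have h := floor_u hx 0
  simp at h
  exact h

/-- the quadrant digits of `x` are the base-4 digits of `u x`. -/
lemma floor_u_succ {x : ℝ × ℝ} (hx : x ∈ unitSq) (j : ℕ) :
    ⌊(4:ℝ)^(j+1) * uFM x⌋ = 4*⌊(4:ℝ)^j * uFM x⌋ + qdigit (j+1) x := by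
  rw [floor_u hx (j+1), floor_u hx j, Finset.sum_range_succ, Finset.mul_sum]
  have h1 : ∀ k ∈ Finset.range j,
      qdigit (k+1) x * 4^((j+1)-1-k) = 4 * (qdigit (k+1) x * 4^(j-1-k)) := by
    intro k hk
    have hk' : k < j := Finset.mem_range.1 hk
    have : (4:ℤ)^((j+1)-1-k) = 4 * 4^(j-1-k) := by
      rw [← pow_succ']
      congr 1
      omega
    rw [this]
    ring
  rw [Finset.sum_congr rfl h1]
  have : (j+1)-1-j = 0 := by omega
  rw [this]
  ring


/-- KEY(bin): the floor of `2^n s` as binary-digit sum. -/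
lemma floor_bin {s : ℝ} (hs : s ∈ Set.Ico (0:ℝ) 1) (n : ℕ) :
    ⌊(2:ℝ)^n * s⌋ = ∑ j ∈ Finset.range n, bdigit (j+1) s * 2^(n-1-j) := by
  have h := bdigit_sum s n
  have hfl : ⌊s⌋ = 0 := Int.floor_eq_zero_iff.2 hs
  rw [hfl] at h
  have hcast := cast_weighted_sum2 (fun j => bdigit (j+1) s) n
  have h2n : ((2:ℝ))^n ≠ 0 := by positivity
  have : ((∑ j ∈ Finset.range n, bdigit (j+1) s * 2^(n-1-j) : ℤ) : ℝ)
      = (⌊(2:ℝ)^n*s⌋ : ℝ) := by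
    rw [hcast, h]
    push_cast
    field_simp
    ring
  exact_mod_cast this.symm

/-- KEY(quad): the floor of `4^n t` as base-4-digit sum. -/
lemma floor_quad {t : ℝ} (ht : t ∈ Set.Ico (0:ℝ) 1) (n : ℕ) :
    ⌊(4:ℝ)^n * t⌋ = ∑ j ∈ Finset.range n, tdigit (j+1) t * 4^(n-1-j) := by
  have h := tdigit_sum t n
  have hfl : ⌊t⌋ = 0 := Int.floor_eq_zero_iff.2 ht
  rw [hfl] at h
  have hcast := cast_weighted_sum (fun j => tdigit (j+1) t) n
  have h2n : ((4:ℝ))^n ≠ 0 := by positivity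
  have : ((∑ j ∈ Finset.range n, tdigit (j+1) t * 4^(n-1-j) : ℤ) : ℝ)
      = (⌊(4:ℝ)^n*t⌋ : ℝ) := by
    rw [hcast, h]
    push_cast
    field_simp
    ring
  exact_mod_cast this.symm

/-- uniqueness of digit expansions in base `B`. -/
lemma base_unique (B : ℤ) (hB : 0 < B) :
    ∀ n (c d : ℕ → ℤ), (∀ j, 0 ≤ c j ∧ c j < B) → (∀ j, 0 ≤ d j ∧ d j < B) →
    (∑ j ∈ Finset.range n, c j * B^(n-1-j) = ∑ j ∈ Finset.range n, d j * B^(n-1-j)) →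
    ∀ j < n, c j = d j := by
  intro n
  induction n with
  | zero => intro c d _ _ _ j hj; omega
  | succ n ih =>
      intro c d hc hd heq j hj
      have hsplit : ∀ e : ℕ → ℤ, (∑ j ∈ Finset.range (n+1), e j * B^(n+1-1-j))
          = B * (∑ j ∈ Finset.range n, e j * B^(n-1-j)) + e n := by
        intro e
        rw [Finset.sum_range_succ, Finset.mul_sum]
        have h0 : (n+1)-1-n = 0 := by omega
        rw [h0]
        simp only [pow_zero, mul_one]
        congr 1
        apply Finset.sum_congr rfl
        intro k hk
        have hk' : k < n := Finset.mem_range.1 hk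
        have : (B:ℤ)^(n+1-1-k) = B * B^(n-1-k) := by
          rw [← pow_succ']
          congr 1
          omega
        rw [this]
        ring
      rw [hsplit c, hsplit d] at heq
      set C := ∑ j ∈ Finset.range n, c j * B^(n-1-j)
      set D := ∑ j ∈ Finset.range n, d j * B^(n-1-j)
      have hcn := hc n
      have hdn := hd n
      have hmod : c n = d n := by
        have h1 : (B*C + c n) % B = c n := by
          rw [add_comm, Int.add_mul_emod_self_left]
          exact Int.emod_eq_of_lt hcn.1 hcn.2
        have h2 : (B*D + d n) % B = d n := by
          rw [add_comm, Int.add_mul_emod_self_left]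
          exact Int.emod_eq_of_lt hdn.1 hdn.2
        rw [← h1, ← h2, heq]
      have hCD : C = D := by
        have : B * C = B * D := by omega
        exact mul_left_cancel₀ hB.ne' this
      rcases Nat.lt_succ_iff_lt_or_eq.1 hj with h | h
      · exact ih c d hc hd hCD j h
      · rw [h]; exact hmod

/-- existence of base-4 digit expansions. -/
lemma base_expand : ∀ (n : ℕ) (m : ℤ), 0 ≤ m → m < 4^n →
    ∃ d : ℕ → ℤ, (∀ j, 0 ≤ d j ∧ d j < 4) ∧
      m = ∑ j ∈ Finset.range n, d j * 4^(n-1-j) := by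
  intro n
  induction n with
  | zero =>
      intro m h0 h1
      exact ⟨fun _ => 0, fun j => by norm_num, by simpa using (by omega : m = 0)⟩
  | succ n ih =>
      intro m h0 h1
      have h4n : (0:ℤ) < 4^n := by positivity
      set a := m / 4^n with ha
      set r := m % 4^n with hr
      have hr0 : 0 ≤ r := Int.emod_nonneg m h4n.ne'
      have hr1 : r < 4^n := Int.emod_lt_of_pos m h4n
      have ha0 : 0 ≤ a := Int.ediv_nonneg h0 h4n.le
      have ha1 : a < 4 := by
        rw [ha, Int.ediv_lt_iff_lt_mul h4n]
        calc m < 4^(n+1) := h1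
          _ = 4 * 4^n := by ring
      have hm : m = 4^n * a + r := by rw [ha, hr]; exact (Int.mul_ediv_add_emod m (4^n)).symm
      obtain ⟨d', hd', hrsum⟩ := ih r hr0 hr1
      refine ⟨fun j => if j = 0 then a else d' (j-1), fun j => by dsimp; split <;> [omega; exact hd' _], ?_⟩
      rw [Finset.sum_range_succ']
      norm_num
      have hterm : ∀ j ∈ Finset.range n,
          d' j * 4^(n-(j+1)) = d' j * (4:ℤ)^(n-1-j) := by
        intro j hj
        congr 2
        omega
      rw [Finset.sum_congr rfl hterm, ← hrsum, hm]
      ring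

/-- bound for binary-digit sums. -/
lemma sum_geom2 : ∀ n : ℕ, ∑ j ∈ Finset.range n, (2:ℤ)^(n-1-j) = 2^n - 1 := by
  intro n
  induction n with
  | zero => simp
  | succ n ih =>
      rw [Finset.sum_range_succ']
      have h1 : ∀ j ∈ Finset.range n, (2:ℤ)^(n+1-1-(j+1)) = 2^(n-1-j) := by
        intro j hj; congr 1; omega
      rw [Finset.sum_congr rfl h1, ih]
      have : n+1-1-0 = n := by omega
      rw [this]
      ring

lemma sum_bin_bounds {e : ℕ → ℤ} (he : ∀ j, 0 ≤ e j ∧ e j ≤ 1) (n : ℕ) :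
    0 ≤ ∑ j ∈ Finset.range n, e j * 2^(n-1-j) ∧
    ∑ j ∈ Finset.range n, e j * 2^(n-1-j) < 2^n := by
  constructor
  · apply Finset.sum_nonneg
    intro j _
    have := (he j).1
    positivity
  · have h1 : ∑ j ∈ Finset.range n, e j * 2^(n-1-j) ≤ ∑ j ∈ Finset.range n, (2:ℤ)^(n-1-j) := by
      apply Finset.sum_le_sum
      intro j _
      have := (he j).2
      nlinarith [pow_pos (by norm_num : (0:ℤ) < 2) (n-1-j)]
    rw [sum_geom2 n] at h1
    have : (0:ℤ) < 2^n := by positivity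
    omega


lemma measurableSet_unitSq : MeasurableSet unitSq :=
  measurableSet_Ico.prod measurableSet_Ico

lemma volume_unitSq : volume unitSq = 1 := by
  unfold unitSq
  rw [Measure.volume_eq_prod, Measure.prod_prod, Real.volume_Ico]
  norm_num

lemma volume_unitSq_ne_top : volume unitSq ≠ ⊤ := by rw [volume_unitSq]; norm_num

lemma measurable_bdigit (j : ℕ) : Measurable (fun s : ℝ => (bdigit j s : ℝ)) := by
  have hcast : Measurable (Int.cast : ℤ → ℝ) := fun _ _ => trivial
  have h : Measurable (fun s : ℝ => bdigit j s) := by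
    unfold bdigit
    apply Measurable.sub
    · exact ((measurable_id.const_mul _).floor)
    · exact (((measurable_id.const_mul _).floor).const_mul 2)
  exact hcast.comp h

lemma measurable_uFM : Measurable uFM := by
  apply Measurable.indicator _ measurableSet_unitSq
  have hpart : ∀ n : ℕ, Measurable (fun x : ℝ × ℝ => ∑ j ∈ Finset.range n, eq4 x j) := by
    intro n
    apply Finset.measurable_sum
    intro j _
    unfold eq4 qdigit
    apply Measurable.div_const
    push_cast
    apply Measurable.add
    · exact (measurable_bdigit (j+1)).comp measurable_fst
    · exact ((measurable_bdigit (j+1)).comp measurable_snd).const_mul 2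
  apply measurable_of_tendsto_metrizable hpart
  rw [tendsto_pi_nhds]
  intro x
  exact (summable_eq4 x).hasSum.tendsto_sum_nat

lemma measurable_cell (n : ℕ) (m : ℤ) :
    MeasurableSet {x : ℝ × ℝ | x ∈ unitSq ∧ ⌊(4:ℝ)^n * uFM x⌋ = m} := by
  apply MeasurableSet.inter measurableSet_unitSq
  exact (measurable_uFM.const_mul _).floor (measurableSet_singleton m)

/-- the level-`n` cells of `u` are dyadic squares of volume `4^{-n}`. -/
lemma cell_volume (n : ℕ) (m : ℤ) (h0 : 0 ≤ m) (h1 : m < 4^n) :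
    volume {x : ℝ × ℝ | x ∈ unitSq ∧ ⌊(4:ℝ)^n * uFM x⌋ = m} = ENNReal.ofReal ((1:ℝ)/4^n) := by
  obtain ⟨d, hd, hm⟩ := base_expand n m h0 h1
  have hd2 : ∀ j, 0 ≤ d j % 2 ∧ d j % 2 ≤ 1 := by intro j; omega
  have hd2' : ∀ j, 0 ≤ d j / 2 ∧ d j / 2 ≤ 1 := by intro j; have := hd j; omega
  obtain ⟨p, hp⟩ : ∃ p : ℤ, p = ∑ j ∈ Finset.range n, (d j % 2) * 2^(n-1-j) := ⟨_, rfl⟩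
  obtain ⟨q, hq⟩ : ∃ q : ℤ, q = ∑ j ∈ Finset.range n, (d j / 2) * 2^(n-1-j) := ⟨_, rfl⟩
  have hsb := sum_bin_bounds hd2 n
  have hsb' := sum_bin_bounds hd2' n
  rw [← hp] at hsb
  rw [← hq] at hsb'
  obtain ⟨hp0, hp1⟩ := hsb
  obtain ⟨hq0, hq1⟩ := hsb'
  have h2n : (0:ℝ) < 2^n := by positivity
  have hset : {x : ℝ × ℝ | x ∈ unitSq ∧ ⌊(4:ℝ)^n * uFM x⌋ = m}
      = Set.Ico ((p:ℝ)/2^n) (((p:ℝ)+1)/2^n) ×ˢ Set.Ico ((q:ℝ)/2^n) (((q:ℝ)+1)/2^n) := by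
    ext x
    constructor
    · rintro ⟨hxsq, hfloor⟩
      have hkey := floor_u hxsq n
      rw [hfloor, hm] at hkey
      have hdig : ∀ j < n, qdigit (j+1) x = d j :=
        base_unique 4 (by norm_num) n _ _
          (fun j => ⟨(qdigit_bounds j x).1, by have := (qdigit_bounds j x).2; omega⟩)
          (fun j => hd j) hkey.symm
      have hb1 : ∀ j < n, bdigit (j+1) x.1 = d j % 2 := by
        intro j hj
        have h1 := hdig j hj
        have h2 := bdigit_mem j x.1
        have h3 := bdigit_mem j x.2
        unfold qdigit at h1
        omega
      have hb2 : ∀ j < n, bdigit (j+1) x.2 = d j / 2 := by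
        intro j hj
        have h1 := hdig j hj
        have h2 := bdigit_mem j x.1
        have h3 := bdigit_mem j x.2
        unfold qdigit at h1
        omega
      have hfx : ⌊(2:ℝ)^n * x.1⌋ = p := by
        rw [floor_bin (mem_unitSq hxsq).1 n, hp]
        apply Finset.sum_congr rfl
        intro j hj
        rw [hb1 j (Finset.mem_range.1 hj)]
      have hfy : ⌊(2:ℝ)^n * x.2⌋ = q := by
        rw [floor_bin (mem_unitSq hxsq).2 n, hq]
        apply Finset.sum_congr rfl
        intro j hj
        rw [hb2 j (Finset.mem_range.1 hj)]
      have hx1 := Int.floor_le ((2:ℝ)^n * x.1)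
      have hx1' := Int.lt_floor_add_one ((2:ℝ)^n * x.1)
      have hx2 := Int.floor_le ((2:ℝ)^n * x.2)
      have hx2' := Int.lt_floor_add_one ((2:ℝ)^n * x.2)
      rw [hfx] at hx1 hx1'
      rw [hfy] at hx2 hx2'
      constructor
      · constructor
        · rw [div_le_iff₀ h2n, mul_comm]; exact hx1
        · rw [lt_div_iff₀ h2n, mul_comm]; exact hx1'
      · constructor
        · rw [div_le_iff₀ h2n, mul_comm]; exact hx2
        · rw [lt_div_iff₀ h2n, mul_comm]; exact hx2'
    · rintro ⟨⟨ha1, ha2⟩, ⟨hb1, hb2⟩⟩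
      have hp1R : ((p:ℝ)+1) ≤ 2^n := by exact_mod_cast Int.lt_iff_add_one_le.1 hp1
      have hq1R : ((q:ℝ)+1) ≤ 2^n := by exact_mod_cast Int.lt_iff_add_one_le.1 hq1
      have hp0R : (0:ℝ) ≤ (p:ℝ) := by exact_mod_cast hp0
      have hq0R : (0:ℝ) ≤ (q:ℝ) := by exact_mod_cast hq0
      have hxsq : x ∈ unitSq := by
        constructor
        · constructor
          · have : (0:ℝ) ≤ (p:ℝ)/2^n := by positivity
            linarith
          · calc x.1 < ((p:ℝ)+1)/2^n := ha2
              _ ≤ 2^n/2^n := by gcongr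
              _ = 1 := div_self h2n.ne'
        · constructor
          · have : (0:ℝ) ≤ (q:ℝ)/2^n := by positivity
            linarith
          · calc x.2 < ((q:ℝ)+1)/2^n := hb2
              _ ≤ 2^n/2^n := by gcongr
              _ = 1 := div_self h2n.ne'
      refine ⟨hxsq, ?_⟩
      have hfx : ⌊(2:ℝ)^n * x.1⌋ = p := by
        apply Int.floor_eq_iff.2
        constructor
        · rw [div_le_iff₀ h2n, mul_comm] at ha1; exact ha1
        · push_cast
          rw [lt_div_iff₀ h2n, mul_comm] at ha2; exact ha2
      have hfy : ⌊(2:ℝ)^n * x.2⌋ = q := by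
        apply Int.floor_eq_iff.2
        constructor
        · rw [div_le_iff₀ h2n, mul_comm] at hb1; exact hb1
        · push_cast
          rw [lt_div_iff₀ h2n, mul_comm] at hb2; exact hb2
      have hbin1 := floor_bin (mem_unitSq hxsq).1 n
      have hbin2 := floor_bin (mem_unitSq hxsq).2 n
      rw [hfx] at hbin1
      rw [hfy] at hbin2
      have hdig1 : ∀ j < n, bdigit (j+1) x.1 = d j % 2 :=
        base_unique 2 (by norm_num) n _ _
          (fun j => by have := bdigit_mem j x.1; omega)
          (fun j => by omega) (by rw [← hbin1]; exact hp)
      have hdig2 : ∀ j < n, bdigit (j+1) x.2 = d j / 2 :=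
        base_unique 2 (by norm_num) n _ _
          (fun j => by have := bdigit_mem j x.2; omega)
          (fun j => by have := hd j; omega) (by rw [← hbin2]; exact hq)
      rw [floor_u hxsq n, hm]
      apply Finset.sum_congr rfl
      intro j hj
      have hj' : j < n := Finset.mem_range.1 hj
      have h1 := hdig1 j hj'
      have h2 := hdig2 j hj'
      have h3 := hd j
      unfold qdigit
      have : bdigit (j+1) x.1 + 2 * bdigit (j+1) x.2 = d j := by omega
      rw [this]
  rw [hset, Measure.volume_eq_prod, Measure.prod_prod, Real.volume_Ico, Real.volume_Ico]
  have harith : ((p:ℝ)+1)/2^n - (p:ℝ)/2^n = 1/2^n := by field_simp; ring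
  have harith2 : ((q:ℝ)+1)/2^n - (q:ℝ)/2^n = 1/2^n := by field_simp; ring
  rw [harith, harith2, ← ENNReal.ofReal_mul (by positivity)]
  congr 1
  rw [div_mul_div_comm, one_mul, ← pow_add]
  norm_num
  rw [← two_mul, pow_mul]
  norm_num

lemma measurableSet_Flt (c : ℝ) : MeasurableSet {x : ℝ × ℝ | x ∈ unitSq ∧ uFM x < c} :=
  measurableSet_unitSq.inter (measurable_uFM measurableSet_Iio)

lemma measurableSet_Fle (c : ℝ) : MeasurableSet {x : ℝ × ℝ | x ∈ unitSq ∧ uFM x ≤ c} :=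
  measurableSet_unitSq.inter (measurable_uFM measurableSet_Iic)

lemma F_dyadic (n : ℕ) (m : ℤ) (h0 : 0 ≤ m) (h1 : m ≤ 4^n) :
    volume {x : ℝ × ℝ | x ∈ unitSq ∧ uFM x < (m:ℝ)/4^n} = ENNReal.ofReal ((m:ℝ)/4^n) := by
  have h4n : (0:ℝ) < 4^n := by positivity
  have hset : {x : ℝ × ℝ | x ∈ unitSq ∧ uFM x < (m:ℝ)/4^n}
      = ⋃ k ∈ Finset.range m.toNat, {x : ℝ × ℝ | x ∈ unitSq ∧ ⌊(4:ℝ)^n * uFM x⌋ = (k:ℤ)} := by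
    ext x
    simp only [Set.mem_setOf_eq, Set.mem_iUnion, Finset.mem_range, exists_prop]
    constructor
    · rintro ⟨hsq, hu⟩
      have hu0 := (u_mem hsq).1
      have hfl0 : 0 ≤ ⌊(4:ℝ)^n * uFM x⌋ := by
        apply Int.le_floor.2
        push_cast
        positivity
      have hfl : ⌊(4:ℝ)^n * uFM x⌋ < m := by
        apply Int.floor_lt.2
        rw [lt_div_iff₀ h4n] at hu
        push_cast
        linarith [hu]
      exact ⟨(⌊(4:ℝ)^n * uFM x⌋).toNat, by omega,
        hsq, by rw [Int.toNat_of_nonneg hfl0]⟩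
    · rintro ⟨k, hk, hsq, hfl⟩
      refine ⟨hsq, ?_⟩
      have h2 := Int.lt_floor_add_one ((4:ℝ)^n * uFM x)
      rw [hfl] at h2
      rw [lt_div_iff₀ h4n]
      have : ((k:ℤ):ℝ) + 1 ≤ (m:ℝ) := by
        have : (k:ℤ) + 1 ≤ m := by omega
        exact_mod_cast this
      push_cast at h2 this ⊢
      linarith
  rw [hset]
  rw [measure_biUnion_finset]
  · have hcv : ∀ k ∈ Finset.range m.toNat,
        volume {x : ℝ × ℝ | x ∈ unitSq ∧ ⌊(4:ℝ)^n * uFM x⌋ = (k:ℤ)}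
          = ENNReal.ofReal ((1:ℝ)/4^n) := by
      intro k hk
      apply cell_volume n k (by positivity)
      have hk' := Finset.mem_range.1 hk
      have : (k:ℤ) < m := by omega
      calc (k:ℤ) < m := this
        _ ≤ 4^n := h1
    rw [Finset.sum_congr rfl hcv, Finset.sum_const, nsmul_eq_mul, Finset.card_range]
    rw [← ENNReal.ofReal_natCast m.toNat, ← ENNReal.ofReal_mul (by positivity)]
    congr 1
    have : ((m.toNat : ℕ) : ℝ) = (m:ℝ) := by
      rw [← Int.toNat_of_nonneg h0]
      push_cast
      rw [Int.toNat_of_nonneg h0]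
    rw [this]
    ring
  · intro k hk k' hk' hne
    apply Set.disjoint_left.2
    rintro x ⟨_, hx1⟩ ⟨_, hx2⟩
    rw [hx1] at hx2
    exact hne (by exact_mod_cast hx2)
  · intro k _
    exact measurable_cell n (k:ℤ)

lemma F_subset_sq (c : ℝ) : {x : ℝ × ℝ | x ∈ unitSq ∧ uFM x < c} ⊆ unitSq := fun x hx => hx.1

lemma F_lt {c : ℝ} (h0 : 0 ≤ c) (h1 : c ≤ 1) :
    volume {x : ℝ × ℝ | x ∈ unitSq ∧ uFM x < c} = ENNReal.ofReal c := by
  set μS := volume {x : ℝ × ℝ | x ∈ unitSq ∧ uFM x < c} with hμS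
  have hfin : μS ≠ ⊤ := by
    apply ne_top_of_le_ne_top volume_unitSq_ne_top
    exact measure_mono (F_subset_sq c)
  have hbounds : ∀ n : ℕ, c - 1/4^n ≤ μS.toReal ∧ μS.toReal ≤ c + 1/4^n := by
    intro n
    have h4n : (0:ℝ) < 4^n := by positivity
    set m₁ : ℤ := ⌊(4:ℝ)^n * c⌋ with hm₁
    have hm₁0 : 0 ≤ m₁ := Int.le_floor.2 (by push_cast; positivity)
    have hm₁4 : m₁ ≤ 4^n := by
      have : (4:ℝ)^n * c ≤ ((4^n : ℤ):ℝ) := by push_cast; nlinarith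
      calc m₁ ≤ ⌊((4^n:ℤ):ℝ)⌋ := Int.floor_le_floor this
        _ = 4^n := Int.floor_intCast _
    set m₂ : ℤ := min (m₁+1) (4^n) with hm₂
    have hm₂0 : 0 ≤ m₂ := by positivity
    have hm₂4 : m₂ ≤ 4^n := min_le_right _ _
    have hfl := Int.floor_le ((4:ℝ)^n * c)
    have hfl' := Int.lt_floor_add_one ((4:ℝ)^n * c)
    rw [← hm₁] at hfl hfl'
    have hlow : ENNReal.ofReal ((m₁:ℝ)/4^n) ≤ μS := by
      rw [← F_dyadic n m₁ hm₁0 hm₁4]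
      apply measure_mono
      rintro x ⟨hsq, hu⟩
      refine ⟨hsq, lt_of_lt_of_le hu ?_⟩
      rw [div_le_iff₀ h4n, mul_comm]
      exact hfl
    have hup : μS ≤ ENNReal.ofReal ((m₂:ℝ)/4^n) := by
      rw [← F_dyadic n m₂ hm₂0 hm₂4]
      apply measure_mono
      rintro x ⟨hsq, hu⟩
      refine ⟨hsq, lt_of_lt_of_le hu ?_⟩
      rw [le_div_iff₀ h4n, mul_comm]
      have hc1 : (4:ℝ)^n * c ≤ ((m₁:ℝ)+1) := by linarith
      have hc2 : (4:ℝ)^n * c ≤ ((4^n:ℤ):ℝ) := by push_cast; nlinarith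
      push_cast at hc2
      have hmin : ((m₂:ℤ):ℝ) = min ((m₁:ℝ)+1) ((4:ℝ)^n) := by
        rw [hm₂]
        push_cast
        rfl
      rw [hmin]
      exact le_min hc1 hc2
    have hl : (m₁:ℝ)/4^n ≤ μS.toReal := (ENNReal.ofReal_le_iff_le_toReal hfin).1 hlow
    have hu : μS.toReal ≤ (m₂:ℝ)/4^n := ENNReal.toReal_le_of_le_ofReal (by positivity) hup
    have hfs : (1/(4:ℝ)^n) * 4^n = 1 := by field_simp
    have hm21 : (m₂:ℝ) ≤ (m₁:ℝ) + 1 := by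
      have : m₂ ≤ m₁ + 1 := min_le_left _ _
      exact_mod_cast this
    constructor
    · rw [← sub_nonneg]
      have h1 : c - 1/4^n ≤ (m₁:ℝ)/4^n := by
        rw [sub_le_iff_le_add, ← add_div ((m₁:ℝ))]
        rw [le_div_iff₀ h4n]
        nlinarith
      linarith
    · have h2 : (m₂:ℝ)/4^n ≤ c + 1/4^n := by
        rw [div_le_iff₀ h4n]
        nlinarith
      linarith
  have hr : μS.toReal = c := by
    by_contra hne
    have hd : 0 < |μS.toReal - c| := abs_pos.2 (sub_ne_zero.2 hne)
    obtain ⟨n, hn⟩ := exists_pow_lt_of_lt_one hd (by norm_num : (1:ℝ)/4 < 1)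
    have hpow : ((1:ℝ)/4)^n = 1/4^n := by rw [div_pow]; norm_num
    rw [hpow] at hn
    obtain ⟨hb1, hb2⟩ := hbounds n
    rcases abs_cases (μS.toReal - c) with ⟨he, _⟩ | ⟨he, _⟩ <;> linarith
  rw [← ENNReal.ofReal_toReal hfin, hr]

lemma F_le {c : ℝ} (h0 : 0 ≤ c) (h1 : c < 1) :
    volume {x : ℝ × ℝ | x ∈ unitSq ∧ uFM x ≤ c} = ENNReal.ofReal c := by
  set μS := volume {x : ℝ × ℝ | x ∈ unitSq ∧ uFM x ≤ c} with hμS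
  have hfin : μS ≠ ⊤ := by
    apply ne_top_of_le_ne_top volume_unitSq_ne_top
    exact measure_mono (fun x hx => hx.1)
  have hlow : ENNReal.ofReal c ≤ μS := by
    rw [← F_lt h0 h1.le]
    exact measure_mono (fun x hx => ⟨hx.1, hx.2.le⟩)
  have hup : ∀ c', c < c' → c' ≤ 1 → μS ≤ ENNReal.ofReal c' := by
    intro c' hc' hc1
    rw [← F_lt (by linarith) hc1]
    exact measure_mono (fun x hx => ⟨hx.1, lt_of_le_of_lt hx.2 hc'⟩)
  have hl : c ≤ μS.toReal := (ENNReal.ofReal_le_iff_le_toReal hfin).1 hlow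
  have hr : μS.toReal = c := by
    by_contra hne
    have hgt : c < μS.toReal := lt_of_le_of_ne hl (Ne.symm hne)
    set c' := min ((c + μS.toReal)/2) 1 with hc'
    have h1' : c < c' := by
      apply lt_min
      · linarith
      · linarith
    have h2' : c' ≤ 1 := min_le_right _ _
    have h3' : c' < μS.toReal := lt_of_le_of_lt (min_le_left _ _) (by linarith)
    have := ENNReal.toReal_le_of_le_ofReal (by linarith) (hup c' h1' h2')
    linarith
  rw [← ENNReal.ofReal_toReal hfin, hr]

lemma band_volume {t h : ℝ} (ht0 : 0 ≤ t) (hh : 0 < h) (hth : t + h < 1) :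
    volume {x : ℝ × ℝ | x ∈ unitSq ∧ t ≤ uFM x ∧ uFM x ≤ t + h} = ENNReal.ofReal h := by
  have hset : {x : ℝ × ℝ | x ∈ unitSq ∧ t ≤ uFM x ∧ uFM x ≤ t + h}
      = {x : ℝ × ℝ | x ∈ unitSq ∧ uFM x ≤ t + h} \ {x : ℝ × ℝ | x ∈ unitSq ∧ uFM x < t} := by
    ext x
    simp only [Set.mem_diff, Set.mem_setOf_eq]
    constructor
    · rintro ⟨hsq, h1, h2⟩
      exact ⟨⟨hsq, h2⟩, fun hc => absurd h1 (not_le.2 hc.2)⟩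
    · rintro ⟨⟨hsq, h2⟩, hnc⟩
      refine ⟨hsq, ?_, h2⟩
      by_contra hlt
      exact hnc ⟨hsq, not_le.1 hlt⟩
  rw [hset]
  rw [measure_diff]
  · rw [F_le (by linarith) hth, F_lt ht0 (by linarith), ← ENNReal.ofReal_sub _ ht0]
    congr 1
    ring
  · rintro x ⟨hsq, hlt⟩
    exact ⟨hsq, by linarith [hlt.le]⟩
  · exact (measurableSet_Flt t).nullMeasurableSet
  · apply ne_top_of_le_ne_top volume_unitSq_ne_top
    exact measure_mono (F_subset_sq t)


/-- coordinate estimate: if the first `n` binary digits of `s` are `e`, then `s` is within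
`2^{-n}` of the full digit series. -/
lemma coord_close {s : ℝ} (e : ℕ → ℤ) (he : ∀ j, 0 ≤ e j ∧ e j ≤ 1)
    (n : ℕ) (hfl : ⌊(2:ℝ)^n * s⌋ = ∑ j ∈ Finset.range n, e j * 2^(n-1-j)) :
    |s - ∑' j, ((e j : ℤ):ℝ)/2^(j+1)| ≤ 1/2^n := by
  have h2n : (0:ℝ) < 2^n := by positivity
  have hE0 : ∀ j, 0 ≤ ((e j : ℤ):ℝ)/2^(j+1) := by
    intro j
    have := (he j).1
    have h2 : (0:ℝ) ≤ ((e j : ℤ):ℝ) := by exact_mod_cast this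
    positivity
  have hE1 : ∀ j, ((e j : ℤ):ℝ)/2^(j+1) ≤ ((2:ℝ)-1)/2^(j+1) := by
    intro j
    have h2 : ((e j : ℤ):ℝ) ≤ (2:ℝ)-1 := by
      norm_num
      exact_mod_cast (he j).2
    gcongr
  have hsum : Summable (fun j => ((e j : ℤ):ℝ)/2^(j+1)) :=
    summable_digits (by norm_num) hE0 hE1
  have hsplit := Summable.sum_add_tsum_nat_add
    (f := fun j => ((e j : ℤ):ℝ)/2^(j+1)) n hsum
  have htail0 : 0 ≤ ∑' j, ((e (j+n) : ℤ):ℝ)/2^(j+n+1) :=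
    tsum_tail_nonneg (e := fun j => ((e j : ℤ):ℝ)/2^(j+1)) hE0 n
  have htail1 : ∑' j, ((e (j+n) : ℤ):ℝ)/2^(j+n+1) ≤ 1/2^n :=
    tsum_tail_le (by norm_num) hE0 hE1 n
  have hcast := cast_weighted_sum2 e n
  rw [← hfl] at hcast
  have hpart : ∑ j ∈ Finset.range n, ((e j : ℤ):ℝ)/2^(j+1) = (⌊(2:ℝ)^n * s⌋:ℝ)/2^n := by
    rw [eq_div_iff h2n.ne', mul_comm]
    exact hcast.symm
  have hx1 := Int.floor_le ((2:ℝ)^n * s)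
  have hx2 := Int.lt_floor_add_one ((2:ℝ)^n * s)
  set P : ℝ := (⌊(2:ℝ)^n * s⌋:ℝ) with hP
  have hs1 : P/2^n ≤ s := by rw [div_le_iff₀ h2n, mul_comm]; exact hx1
  have hs2 : s < P/2^n + 1/2^n := by
    rw [← add_div, lt_div_iff₀ h2n, mul_comm]
    exact hx2
  have hγ : ∑' j, ((e j : ℤ):ℝ)/2^(j+1) = P/2^n + ∑' j, ((e (j+n) : ℤ):ℝ)/2^(j+n+1) := by
    rw [← hsplit, hpart]
  rw [hγ]
  rw [abs_le]
  constructor <;> nlinarith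

/-- points of the band around level `t` are close to `lcurve t`. -/
lemma band_close {t : ℝ} (ht : t ∈ Set.Ico (0:ℝ) 1) (n : ℕ) {h : ℝ}
    (hsmall : (4:ℝ)^n * (t + h) < (⌊(4:ℝ)^n * t⌋:ℝ) + 1) {x : ℝ × ℝ}
    (hx : x ∈ unitSq) (h1 : t ≤ uFM x) (h2 : uFM x ≤ t + h) :
    |x.1 - (lcurve t).1| ≤ 1/2^n ∧ |x.2 - (lcurve t).2| ≤ 1/2^n := by
  -- floors agree up to level n
  have hfl : ∀ j, j ≤ n → ⌊(4:ℝ)^j * uFM x⌋ = ⌊(4:ℝ)^j * t⌋ := by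
    intro j hj
    have h4j : (0:ℝ) < 4^j := by positivity
    have hge : ⌊(4:ℝ)^j * t⌋ ≤ ⌊(4:ℝ)^j * uFM x⌋ := by
      apply Int.floor_le_floor
      nlinarith
    have hnest : (⌊(4:ℝ)^n * t⌋:ℝ) + 1 ≤ (4:ℝ)^(n-j) * ((⌊(4:ℝ)^j * t⌋:ℝ) + 1) := by
      have hlt : ⌊(4:ℝ)^n * t⌋ < (4^(n-j) : ℤ) * (⌊(4:ℝ)^j * t⌋ + 1) := by
        apply Int.floor_lt.2
        push_cast
        have hpow : (4:ℝ)^n = 4^(n-j) * 4^j := by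
          rw [← pow_add]
          congr 1
          omega
        rw [hpow, mul_assoc]
        have := Int.lt_floor_add_one ((4:ℝ)^j * t)
        have h4nj : (0:ℝ) < 4^(n-j) := by positivity
        nlinarith
      have := Int.lt_iff_add_one_le.1 hlt
      have hc : ((⌊(4:ℝ)^n * t⌋ + 1 : ℤ):ℝ) ≤ (((4^(n-j) : ℤ) * (⌊(4:ℝ)^j * t⌋ + 1) : ℤ):ℝ) := by
        exact_mod_cast this
      push_cast at hc
      push_cast
      linarith
    have hlt2 : ⌊(4:ℝ)^j * uFM x⌋ < ⌊(4:ℝ)^j * t⌋ + 1 := by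
      apply Int.floor_lt.2
      push_cast
      have hpow : (4:ℝ)^n = 4^(n-j) * 4^j := by rw [← pow_add]; congr 1; omega
      have h4nj : (0:ℝ) < 4^(n-j) := by positivity
      have k1 : (4:ℝ)^(n-j) * ((4:ℝ)^j*(t+h)) < 4^(n-j) * ((⌊(4:ℝ)^j*t⌋:ℝ)+1) := by
        calc (4:ℝ)^(n-j) * ((4:ℝ)^j*(t+h)) = (4:ℝ)^n * (t+h) := by rw [hpow]; ring
          _ < (⌊(4:ℝ)^n * t⌋:ℝ) + 1 := hsmall
          _ ≤ 4^(n-j) * ((⌊(4:ℝ)^j*t⌋:ℝ)+1) := hnest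
      have key : (4:ℝ)^j * (t+h) < (⌊(4:ℝ)^j*t⌋:ℝ) + 1 := (mul_lt_mul_iff_right₀ h4nj).1 k1
      nlinarith [key, h2, h4j]
    omega
  -- digits agree up to level n
  have hdig : ∀ j, j < n → qdigit (j+1) x = tdigit (j+1) t := by
    intro j hj
    have h1' := floor_u_succ hx j
    have h2' := tdigit_succ_eq j t
    have e1 := hfl (j+1) (by omega)
    have e2 := hfl j (by omega)
    have hps : (4:ℝ)^(j+1) * uFM x = 4 * ((4:ℝ)^j * uFM x) := by ring
    have hps' : (4:ℝ)^(j+1) * t = 4 * ((4:ℝ)^j * t) := by ring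
    rw [hps] at e1 h1'
    rw [hps'] at e1
    rw [e1, e2] at h1'
    omega
  have hb1 : ∀ j, j < n → bdigit (j+1) x.1 = tdigit (j+1) t % 2 := by
    intro j hj
    have h1' := hdig j hj
    have h2' := bdigit_mem j x.1
    have h3' := bdigit_mem j x.2
    have h4' := tdigit_bounds j t
    unfold qdigit at h1'
    omega
  have hb2 : ∀ j, j < n → bdigit (j+1) x.2 = tdigit (j+1) t / 2 := by
    intro j hj
    have h1' := hdig j hj
    have h2' := bdigit_mem j x.1
    have h3' := bdigit_mem j x.2
    have h4' := tdigit_bounds j t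
    unfold qdigit at h1'
    omega
  constructor
  · apply coord_close (fun j => tdigit (j+1) t % 2)
      (fun j => by have := tdigit_bounds j t; omega) n
    rw [floor_bin (mem_unitSq hx).1 n]
    apply Finset.sum_congr rfl
    intro j hj
    rw [hb1 j (Finset.mem_range.1 hj)]
  · apply coord_close (fun j => tdigit (j+1) t / 2)
      (fun j => by have := tdigit_bounds j t; omega) n
    rw [floor_bin (mem_unitSq hx).2 n]
    apply Finset.sum_congr rfl
    intro j hj
    rw [hb2 j (Finset.mem_range.1 hj)]


lemma band_subset_Icc {t h : ℝ} :
    {x : ℝ × ℝ | x ∈ unitSq ∧ t ≤ uFM x ∧ uFM x ≤ t + h} ⊆ Set.Icc ((0:ℝ),(0:ℝ)) ((1:ℝ),(1:ℝ)) := by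
  rintro x ⟨hsq, -, -⟩
  obtain ⟨h1, h2⟩ := mem_unitSq hsq
  exact ⟨⟨h1.1, h2.1⟩, ⟨h1.2.le, h2.2.le⟩⟩

lemma measurableSet_band (t h : ℝ) :
    MeasurableSet {x : ℝ × ℝ | x ∈ unitSq ∧ t ≤ uFM x ∧ uFM x ≤ t + h} := by
  apply measurableSet_unitSq.inter
  exact (measurable_uFM measurableSet_Ici).inter (measurable_uFM measurableSet_Iic)

end FM18


/-- The normalized level bands of `u` concentrate to a Dirac mass on the Lebesgue curve:
for every `t ∈ [0,1)` and every bounded continuous `f`,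
`(1/h) ∫_{{t ≤ u ≤ t+h}} f dL² → f(γ(t))` as `h → 0⁺`. -/
theorem stmt18 (t : ℝ) (ht : t ∈ Set.Ico (0:ℝ) 1)
    (f : ℝ × ℝ → ℝ) (hf : Continuous f) (hfb : ∃ C : ℝ, ∀ x, |f x| ≤ C) :
    Filter.Tendsto
      (fun h : ℝ =>
        (1 / h) * ∫ x in {x : ℝ × ℝ | x ∈ unitSq ∧ t ≤ uFM x ∧ uFM x ≤ t + h}, f x)
      (nhdsWithin 0 (Set.Ioi 0)) (nhds (f (lcurve t))) := by
  classical
  rw [Metric.tendsto_nhdsWithin_nhds]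
  intro ε hε
  set c := f (lcurve t) with hc
  -- continuity at lcurve t
  obtain ⟨δ₁, hδ₁, hcont⟩ := Metric.continuousAt_iff.1 (hf.continuousAt (x := lcurve t))
    (ε/2) (by linarith)
  -- choose n with 1/2^n < δ₁
  obtain ⟨n, hn⟩ := exists_pow_lt_of_lt_one hδ₁ (by norm_num : (1:ℝ)/2 < 1)
  have hn' : (1:ℝ)/2^n < δ₁ := by
    rw [div_pow] at hn
    norm_num at hn
    rw [one_div]
    exact_mod_cast hn
  have h4n : (0:ℝ) < 4^n := by positivity
  have hflr := Int.lt_floor_add_one ((4:ℝ)^n * t)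
  set δ := min (((⌊(4:ℝ)^n * t⌋:ℝ)+1)/4^n - t) (1 - t) with hδ
  have hδpos : 0 < δ := by
    apply lt_min
    · have : t < ((⌊(4:ℝ)^n * t⌋:ℝ)+1)/4^n := by rw [lt_div_iff₀ h4n]; nlinarith
      linarith
    · linarith [ht.2]
  refine ⟨δ, hδpos, ?_⟩
  intro h hmem hdist
  have hh : 0 < h := hmem
  rw [Real.dist_eq, sub_zero, abs_of_pos hh] at hdist
  have hh1 : t + h < 1 := by
    have := min_le_right (((⌊(4:ℝ)^n * t⌋:ℝ)+1)/4^n - t) (1 - t)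
    linarith [lt_of_lt_of_le hdist this]
  have hsmall : (4:ℝ)^n * (t + h) < (⌊(4:ℝ)^n * t⌋:ℝ) + 1 := by
    have h1 := min_le_left (((⌊(4:ℝ)^n * t⌋:ℝ)+1)/4^n - t) (1 - t)
    have h2 : h < ((⌊(4:ℝ)^n * t⌋:ℝ)+1)/4^n - t := lt_of_lt_of_le hdist h1
    have h3 : (t + h) * 4^n < (((⌊(4:ℝ)^n * t⌋:ℝ)+1)/4^n) * 4^n := by nlinarith
    have h4 : (((⌊(4:ℝ)^n * t⌋:ℝ)+1)/4^n) * 4^n = (⌊(4:ℝ)^n * t⌋:ℝ)+1 := by field_simp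
    nlinarith
  set S := {x : ℝ × ℝ | x ∈ unitSq ∧ t ≤ uFM x ∧ uFM x ≤ t + h} with hS
  have hvol : volume S = ENNReal.ofReal h := FM18.band_volume ht.1 hh hh1
  have hvol_ne : volume S ≠ ⊤ := by rw [hvol]; exact ENNReal.ofReal_ne_top
  have hvolR : (volume S).toReal = h := by rw [hvol, ENNReal.toReal_ofReal hh.le]
  -- closeness of points of S to lcurve t
  have hclose : ∀ x ∈ S, dist (f x) c < ε/2 := by
    intro x hx
    obtain ⟨hsq, h1, h2⟩ := hx
    obtain ⟨hc1, hc2⟩ := FM18.band_close ht n hsmall hsq h1 h2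
    apply hcont
    rw [Prod.dist_eq]
    apply max_lt
    · rw [Real.dist_eq]; exact lt_of_le_of_lt hc1 hn'
    · rw [Real.dist_eq]; exact lt_of_le_of_lt hc2 hn'
  -- integrability
  have hint : IntegrableOn f S volume :=
    (hf.integrableOn_Icc).mono_set FM18.band_subset_Icc
  have hint_const : IntegrableOn (fun _ : ℝ × ℝ => c) S volume := by
    exact integrableOn_const (by rw [hvol]; exact ENNReal.ofReal_ne_top)
  have hIc : ∫ x in S, (fun _ => c) x = h * c := by
    rw [setIntegral_const, measureReal_def, hvolR, smul_eq_mul]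
  have hksub : ∫ x in S, (f x - c) = (∫ x in S, f x) - h * c := by
    rw [integral_sub hint hint_const, hIc]
  have hbound : ‖∫ x in S, (f x - c)‖ ≤ (ε/2) * (volume S).toReal := by
    apply norm_setIntegral_le_of_norm_le_const (by rw [hvol]; exact ENNReal.ofReal_lt_top)
    · intro x hx
      rw [Real.norm_eq_abs, ← Real.dist_eq]
      exact (hclose x hx).le
  rw [hvolR] at hbound
  rw [Real.dist_eq]
  have hhne : h ≠ 0 := hh.ne'
  have heq : 1/h * (∫ x in S, f x) - c = (1/h) * ((∫ x in S, f x) - h * c) := by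
    field_simp
  rw [heq, abs_mul, abs_of_pos (by positivity : (0:ℝ) < 1/h), ← hksub]
  rw [Real.norm_eq_abs] at hbound
  calc 1/h * |∫ x in S, (f x - c)| ≤ 1/h * ((ε/2) * h) := by
        apply mul_le_mul_of_nonneg_left hbound (by positivity)
    _ = ε/2 := by field_simp
    _ < ε := by linarith
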